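/- Every element α of the orthogonal transvection group Trans_O(P, ⟨,⟩) is homotopic to the identity: there exists β(X) ∈ Trans_O(P[X], ⟨,⟩) with β(0) = Id and β(1) = α. -/
import Mathlib


open TensorProduct
open Polynomial

/-- The orthogonal transvection group Trans_O(P, B): the subgroup of the units of
End(P) generated by the transvections p ↦ p − B(u,p)•v + B(v,p)•u with u, v
isotropic, B(u,v) = 0, and u or v unimodular. -/
def TransO (R : Type*) [CommRing R] (P : Type*) [AddCommGroup P] [Module R P]
    (B : P →ₗ[R] P →ₗ[R] R) : Subgroup (Module.End R P)ˣ :=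
  Subgroup.closure {g | ∃ u v : P,
    B u u = 0 ∧ B v v = 0 ∧ B u v = 0 ∧
    ((∃ f : P →ₗ[R] R, f u = 1) ∨ (∃ f : P →ₗ[R] R, f v = 1)) ∧
    (g : Module.End R P) =
      LinearMap.id + LinearMap.smulRight (B v) u - LinearMap.smulRight (B u) v}

def tUnit {S : Type*} [CommRing S] {Q : Type*} [AddCommGroup Q] [Module S Q]
    (b : Q →ₗ[S] Q →ₗ[S] S) (u v : Q)
    (huu : b u u = 0) (hvv : b v v = 0) (huv : b u v = 0) (hvu : b v u = 0) :
    (Module.End S Q)ˣ where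
  val := LinearMap.id + LinearMap.smulRight (b v) u - LinearMap.smulRight (b u) v
  inv := LinearMap.id - LinearMap.smulRight (b v) u + LinearMap.smulRight (b u) v
  val_inv := by
    apply LinearMap.ext; intro x
    simp [Module.End.mul_apply, map_add, map_sub, map_smul, huu, hvv, huv, hvu,
      smul_smul, sub_add_eq_sub_sub]
    abel
  inv_val := by
    apply LinearMap.ext; intro x
    simp [Module.End.mul_apply, map_add, map_sub, map_smul, huu, hvv, huv, hvu,
      smul_smul, sub_add_eq_sub_sub]
    abel

/-- Evaluation of `R[X] ⊗ P` at `c : R`. -/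
noncomputable def evalT (R : Type*) [CommRing R] (P : Type*) [AddCommGroup P] [Module R P] (c : R) :
    (Polynomial R ⊗[R] P) →ₗ[R] P :=
  (TensorProduct.lid R P).toLinearMap ∘ₗ
    TensorProduct.map (Polynomial.leval c) (LinearMap.id : P →ₗ[R] P)

@[simp] theorem evalT_tmul {R : Type*} [CommRing R] {P : Type*} [AddCommGroup P] [Module R P]
    (c : R) (f : Polynomial R) (p : P) :
    evalT R P c (f ⊗ₜ[R] p) = f.eval c • p := by
  simp [evalT, leval_apply]

/-- A linear functional `f : P →ₗ R` base-changed to `R[X] ⊗ P →ₗ[R[X]] R[X]`. -/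
noncomputable def funT (R : Type*) [CommRing R] {P : Type*} [AddCommGroup P] [Module R P]
    (f : P →ₗ[R] R) : (Polynomial R ⊗[R] P) →ₗ[Polynomial R] Polynomial R :=
  (Algebra.TensorProduct.rid R (Polynomial R) (Polynomial R)).toLinearMap ∘ₗ
    f.baseChange (Polynomial R)

@[simp] theorem funT_tmul {R : Type*} [CommRing R] {P : Type*} [AddCommGroup P] [Module R P]
    (f : P →ₗ[R] R) (a : Polynomial R) (p : P) :
    funT R f (a ⊗ₜ[R] p) = f p • a := by
  simp [funT, LinearMap.baseChange_tmul, Algebra.TensorProduct.rid_tmul]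

/-- Every element of the orthogonal transvection group is homotopic to the
identity: there is β(X) ∈ Trans_O(P[X]) with β(0) = Id and β(1) = α. Here
P[X] = R[X] ⊗[R] P carries the extended (base-changed) form, and evaluation at
c ∈ R is induced by X ↦ c on the first tensor factor. -/
theorem transvection_homotopic_to_identity
    {R : Type*} [CommRing R] (P : Type*) [AddCommGroup P] [Module R P]
    [Module.Finite R P] [Module.Projective R P]
    (B : P →ₗ[R] P →ₗ[R] R)
    (hsymm : ∀ x y, B x y = B y x)
    (hnd : Function.Bijective (B : P → P →ₗ[R] R))
    (α : (Module.End R P)ˣ) (hα : α ∈ TransO R P B) :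
    ∃ β ∈ TransO (Polynomial R) (Polynomial R ⊗[R] P)
        (LinearMap.BilinForm.baseChange (Polynomial R) B),
      (∀ p : P,
        (TensorProduct.lid R P)
          (TensorProduct.map (Polynomial.leval (0 : R)) (LinearMap.id : P →ₗ[R] P)
            ((β : Module.End (Polynomial R) (Polynomial R ⊗[R] P))
              ((1 : Polynomial R) ⊗ₜ[R] p))) = p) ∧
      (∀ p : P,
        (TensorProduct.lid R P)
          (TensorProduct.map (Polynomial.leval (1 : R)) (LinearMap.id : P →ₗ[R] P)
            ((β : Module.End (Polynomial R) (Polynomial R ⊗[R] P))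
              ((1 : Polynomial R) ⊗ₜ[R] p))) =
          (α : Module.End R P) p) := by
  classical
  set B' := LinearMap.BilinForm.baseChange (Polynomial R) B with hB'
  -- strengthened statement
  suffices h : ∃ β ∈ TransO (Polynomial R) (Polynomial R ⊗[R] P) B',
      (evalT R P 0 ∘ₗ ((β : Module.End (Polynomial R) (Polynomial R ⊗[R] P)) : (Polynomial R ⊗[R] P) →ₗ[Polynomial R] (Polynomial R ⊗[R] P)).restrictScalars R
        = evalT R P 0) ∧
      (evalT R P 1 ∘ₗ ((β : Module.End (Polynomial R) (Polynomial R ⊗[R] P)) : (Polynomial R ⊗[R] P) →ₗ[Polynomial R] (Polynomial R ⊗[R] P)).restrictScalars R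
        = (α : Module.End R P) ∘ₗ evalT R P 1) by
    obtain ⟨β, hmem, h0, h1⟩ := h
    refine ⟨β, hmem, fun p => ?_, fun p => ?_⟩
    · have := LinearMap.congr_fun h0 ((1 : Polynomial R) ⊗ₜ[R] p)
      simpa [evalT] using this
    · have := LinearMap.congr_fun h1 ((1 : Polynomial R) ⊗ₜ[R] p)
      simpa [evalT] using this
  clear hnd
  induction hα using Subgroup.closure_induction with
  | one =>
    refine ⟨1, one_mem _, ?_, ?_⟩ <;> apply TensorProduct.ext' <;> intro a p <;> simp
  | mul x y hx hy ihx ihy =>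
    obtain ⟨βx, hmx, hx0, hx1⟩ := ihx
    obtain ⟨βy, hmy, hy0, hy1⟩ := ihy
    refine ⟨βx * βy, mul_mem hmx hmy, ?_, ?_⟩
    · calc evalT R P 0 ∘ₗ _ = (evalT R P 0 ∘ₗ (βx.val.restrictScalars R)) ∘ₗ (βy.val.restrictScalars R) := by
            rfl
        _ = evalT R P 0 := by rw [hx0, hy0]
    · calc evalT R P 1 ∘ₗ _ = (evalT R P 1 ∘ₗ (βx.val.restrictScalars R)) ∘ₗ (βy.val.restrictScalars R) := by
            rfl
        _ = x.val ∘ₗ (evalT R P 1 ∘ₗ (βy.val.restrictScalars R)) := by rw [hx1]; rfl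
        _ = (x * y).val ∘ₗ evalT R P 1 := by rw [hy1]; rfl
  | inv x hx ihx =>
    obtain ⟨βx, hmx, hx0, hx1⟩ := ihx
    refine ⟨βx⁻¹, inv_mem hmx, ?_, ?_⟩
    · have : evalT R P 0 = (evalT R P 0 ∘ₗ (βx.val.restrictScalars R)) ∘ₗ ((βx⁻¹).val.restrictScalars R) := by
        rw [LinearMap.comp_assoc]
        have : (βx.val.restrictScalars R) ∘ₗ ((βx⁻¹).val.restrictScalars R)
            = LinearMap.id := by
          apply LinearMap.ext; intro z
          show βx.val ((βx⁻¹).val z) = z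
          rw [← Module.End.mul_apply, ← Units.val_mul, mul_inv_cancel, Units.val_one,
            Module.End.one_apply]
        rw [this, LinearMap.comp_id]
      conv_lhs => skip
      rw [hx0] at this
      exact this.symm
    · have key : evalT R P 1 = (x.val ∘ₗ evalT R P 1) ∘ₗ ((βx⁻¹).val.restrictScalars R) := by
        rw [← hx1, LinearMap.comp_assoc]
        have : (βx.val.restrictScalars R) ∘ₗ ((βx⁻¹).val.restrictScalars R)
            = LinearMap.id := by
          apply LinearMap.ext; intro z
          show βx.val ((βx⁻¹).val z) = z
          rw [← Module.End.mul_apply, ← Units.val_mul, mul_inv_cancel, Units.val_one,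
            Module.End.one_apply]
        rw [this, LinearMap.comp_id]
      have : (x⁻¹).val ∘ₗ evalT R P 1
          = (x⁻¹).val ∘ₗ ((x.val ∘ₗ evalT R P 1) ∘ₗ ((βx⁻¹).val.restrictScalars R)) := by
        rw [← key]
      rw [this]
      apply LinearMap.ext; intro z
      have hxx : ∀ w, (x⁻¹).val (x.val w) = w := fun w => by
        rw [← Module.End.mul_apply, ← Units.val_mul, inv_mul_cancel, Units.val_one,
          Module.End.one_apply]
      simp [LinearMap.comp_apply, hxx]
  | mem g hg =>
    obtain ⟨u, v, huu, hvv, huv, hunim, hgval⟩ := hg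
    have hvu : B v u = 0 := by rw [hsymm]; exact huv
    -- choose scaled vectors
    obtain hu | hv := hunim
    · -- u unimodular: scale v by X
      set u' : Polynomial R ⊗[R] P := (1 : Polynomial R) ⊗ₜ[R] u with hu'
      set v' : Polynomial R ⊗[R] P := (X : Polynomial R) ⊗ₜ[R] v with hv'
      have h1 : B' u' u' = 0 := by simp [hu', hB', huu]
      have h2 : B' v' v' = 0 := by simp [hv', hB', hvv]
      have h3 : B' u' v' = 0 := by simp [hu', hv', hB', huv]
      have h4 : B' v' u' = 0 := by simp [hu', hv', hB', hvu]
      refine ⟨tUnit B' u' v' h1 h2 h3 h4, Subgroup.subset_closure ⟨u', v', h1, h2, h3, ?_, rfl⟩,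
        ?_, ?_⟩
      · left
        obtain ⟨f, hf⟩ := hu
        exact ⟨funT R f, by simp [hu', hf]⟩
      · apply TensorProduct.ext'; intro a p
        simp [tUnit, hu', hv', hB', LinearMap.smulRight_apply, smul_tmul', smul_eq_mul,
          smul_smul]
      · apply TensorProduct.ext'; intro a p
        rw [hgval]
        simp [tUnit, hu', hv', hB', LinearMap.smulRight_apply, smul_tmul', smul_eq_mul,
          smul_smul, smul_sub, smul_add]
        module
    · -- v unimodular: scale u by X
      set u' : Polynomial R ⊗[R] P := (X : Polynomial R) ⊗ₜ[R] u with hu'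
      set v' : Polynomial R ⊗[R] P := (1 : Polynomial R) ⊗ₜ[R] v with hv'
      have h1 : B' u' u' = 0 := by simp [hu', hB', huu]
      have h2 : B' v' v' = 0 := by simp [hv', hB', hvv]
      have h3 : B' u' v' = 0 := by simp [hu', hv', hB', huv]
      have h4 : B' v' u' = 0 := by simp [hu', hv', hB', hvu]
      refine ⟨tUnit B' u' v' h1 h2 h3 h4, Subgroup.subset_closure ⟨u', v', h1, h2, h3, ?_, rfl⟩,
        ?_, ?_⟩
      · right
        obtain ⟨f, hf⟩ := hv
        exact ⟨funT R f, by simp [hv', hf]⟩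
      · apply TensorProduct.ext'; intro a p
        simp [tUnit, hu', hv', hB', LinearMap.smulRight_apply, smul_tmul', smul_eq_mul,
          smul_smul]
      · apply TensorProduct.ext'; intro a p
        rw [hgval]
        simp [tUnit, hu', hv', hB', LinearMap.smulRight_apply, smul_tmul', smul_eq_mul,
          smul_smul, smul_sub, smul_add]
        module
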